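/- For all ρ > 0, m ∈ ℝ^d, M ∈ S₀^d, the operator norm of M satisfies |M|_∞ ≤ 2·((d−1)/d)·e_kin(ρ,m,M). -/

import Mathlib

open Matrix

noncomputable def lamMax {d : ℕ} (M : Matrix (Fin d) (Fin d) ℝ) : ℝ :=
  sSup {r : ℝ | ∃ v : Fin d → ℝ, v ⬝ᵥ v = 1 ∧ v ⬝ᵥ M.mulVec v = r}

noncomputable def eKin {d : ℕ} (ρ : ℝ) (m : Fin d → ℝ) (M : Matrix (Fin d) (Fin d) ℝ) : ℝ :=
  ((d : ℝ) / 2) * lamMax (ρ⁻¹ • vecMulVec m m - M)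

/-- Operator norm of a symmetric matrix: largest absolute value of the quadratic
form over unit vectors (= largest absolute value of an eigenvalue). -/
noncomputable def opNormInf {d : ℕ} (M : Matrix (Fin d) (Fin d) ℝ) : ℝ :=
  sSup {r : ℝ | ∃ v : Fin d → ℝ, v ⬝ᵥ v = 1 ∧ |v ⬝ᵥ M.mulVec v| = r}

lemma quadSet_bddAbove {d : ℕ} (A : Matrix (Fin d) (Fin d) ℝ) :
    BddAbove {r : ℝ | ∃ v : Fin d → ℝ, v ⬝ᵥ v = 1 ∧ v ⬝ᵥ A.mulVec v = r} := by
  refine ⟨∑ i, ∑ j, |A i j|, ?_⟩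
  rintro r ⟨v, hv, rfl⟩
  have habs : ∀ i, |v i| ≤ 1 := by
    intro i
    have h1 : v i * v i ≤ 1 := by
      rw [← hv]
      exact Finset.single_le_sum (f := fun j => v j * v j)
        (fun j _ => mul_self_nonneg _) (Finset.mem_univ i)
    nlinarith [abs_nonneg (v i), sq_abs (v i)]
  have : v ⬝ᵥ A.mulVec v = ∑ i, ∑ j, v i * (A i j * v j) := by
    simp [dotProduct, mulVec, Finset.mul_sum]
  rw [this]
  refine Finset.sum_le_sum fun i _ => Finset.sum_le_sum fun j _ => ?_
  calc v i * (A i j * v j) ≤ |v i * (A i j * v j)| := le_abs_self _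
    _ = |v i| * |A i j| * |v j| := by rw [abs_mul, abs_mul]; ring
    _ ≤ 1 * |A i j| * 1 := by
        have h1 : |v i| * |A i j| ≤ 1 * |A i j| :=
          mul_le_mul_of_nonneg_right (habs i) (abs_nonneg _)
        exact mul_le_mul h1 (habs j) (abs_nonneg _) (by positivity)
    _ = |A i j| := by ring

lemma single_unit {d : ℕ} (k : Fin d) :
    (Pi.single k (1 : ℝ)) ⬝ᵥ (Pi.single k (1 : ℝ)) = 1 := by
  simp [dotProduct, Pi.single_apply]

lemma single_quad {d : ℕ} (A : Matrix (Fin d) (Fin d) ℝ) (k : Fin d) :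
    (Pi.single k (1 : ℝ)) ⬝ᵥ A.mulVec (Pi.single k (1 : ℝ)) = A k k := by
  simp [mulVec_single, dotProduct, Pi.single_apply]

lemma exists_extend {d : ℕ} (hd0 : 0 < d) (v : Fin d → ℝ) (hv : v ⬝ᵥ v = 1) :
    ∃ b : Fin d → (Fin d → ℝ), b ⟨0, hd0⟩ = v ∧
      ∀ i j, b i ⬝ᵥ b j = if i = j then (1 : ℝ) else 0 := by
  let vE : EuclideanSpace ℝ (Fin d) := WithLp.toLp 2 v
  have hcard : Module.finrank ℝ (EuclideanSpace ℝ (Fin d)) = Fintype.card (Fin d) := by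
    simp [finrank_euclideanSpace_fin]
  have hinner : ∀ x y : EuclideanSpace ℝ (Fin d),
      (inner ℝ x y : ℝ) = (x : Fin d → ℝ) ⬝ᵥ (y : Fin d → ℝ) := by
    intro x y
    simp [PiLp.inner_apply, RCLike.inner_apply, dotProduct, mul_comm]
  have horth : Orthonormal ℝ (({⟨0, hd0⟩} : Set (Fin d)).restrict (fun _ => vE)) := by
    rw [orthonormal_iff_ite]
    intro i j
    have hij : i = j := Subtype.ext (by
      have hi := i.2; have hj := j.2
      simp only [Set.mem_singleton_iff] at hi hj
      rw [hi, hj])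
    rw [hij, if_pos rfl]
    show (inner ℝ vE vE : ℝ) = 1
    rw [hinner]; exact hv
  obtain ⟨b, hb⟩ := horth.exists_orthonormalBasis_extension_of_card_eq hcard
  refine ⟨fun i => (b i : Fin d → ℝ), ?_, ?_⟩
  · have := hb ⟨0, hd0⟩ rfl
    simpa [vE] using congrArg (fun x : EuclideanSpace ℝ (Fin d) => (x : Fin d → ℝ)) this
  · intro i j
    have := (orthonormal_iff_ite.mp b.orthonormal) i j
    rw [hinner] at this
    exact this

lemma trace_eq_sum_quad {d : ℕ} (M : Matrix (Fin d) (Fin d) ℝ)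
    (b : Fin d → Fin d → ℝ)
    (hb : ∀ i j, b i ⬝ᵥ b j = if i = j then (1 : ℝ) else 0) :
    M.trace = ∑ i, b i ⬝ᵥ M.mulVec (b i) := by
  classical
  set Q : Matrix (Fin d) (Fin d) ℝ := Matrix.of (fun k i => b i k) with hQdef
  have hQ : Qᵀ * Q = 1 := by
    ext i j
    simpa [hQdef, Matrix.mul_apply, Matrix.one_apply, dotProduct] using hb i j
  have hQ' : Q * Qᵀ = 1 := mul_eq_one_comm.mp hQ
  have h1 : (Qᵀ * M * Q).trace = M.trace := by
    rw [trace_mul_cycle, hQ', one_mul]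
  rw [← h1]
  unfold Matrix.trace
  apply Finset.sum_congr rfl
  intro i _
  show (Qᵀ * M * Q) i i = b i ⬝ᵥ M.mulVec (b i)
  simp only [Matrix.mul_apply, Matrix.transpose_apply, hQdef, Matrix.of_apply,
    dotProduct, mulVec, Finset.sum_mul, Finset.mul_sum]
  rw [Finset.sum_comm]
  apply Finset.sum_congr rfl
  intro k _
  apply Finset.sum_congr rfl
  intro l _
  ring

/-- |M|_∞ ≤ 2·((d−1)/d)·e_kin(ρ,m,M). -/
theorem opNorm_le_eKin {d : ℕ} (hd : 2 ≤ d) (ρ : ℝ) (hρ : 0 < ρ)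
    (m : Fin d → ℝ) (M : Matrix (Fin d) (Fin d) ℝ)
    (hsymm : M.IsSymm) (htr : M.trace = 0) :
    opNormInf M ≤ 2 * (((d : ℝ) - 1) / d) * eKin ρ m M := by
  have hd0 : 0 < d := lt_of_lt_of_le (by norm_num) hd
  have hdR : (0 : ℝ) < d := by exact_mod_cast hd0
  have hdR2 : (2 : ℝ) ≤ d := by exact_mod_cast hd
  set A : Matrix (Fin d) (Fin d) ℝ := ρ⁻¹ • vecMulVec m m - M with hA
  set L : ℝ := lamMax A with hL
  have hrhs : 2 * (((d : ℝ) - 1) / d) * eKin ρ m M = ((d : ℝ) - 1) * L := by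
    show 2 * (((d : ℝ) - 1) / d) * (((d : ℝ) / 2) * lamMax (ρ⁻¹ • vecMulVec m m - M))
        = ((d : ℝ) - 1) * L
    rw [← hA, ← hL]
    field_simp
  have hle : ∀ v : Fin d → ℝ, v ⬝ᵥ v = 1 → v ⬝ᵥ A.mulVec v ≤ L :=
    fun v hv => le_csSup (quadSet_bddAbove A) ⟨v, hv, rfl⟩
  have hAquad : ∀ v : Fin d → ℝ,
      v ⬝ᵥ A.mulVec v = ρ⁻¹ * ((m ⬝ᵥ v) * (m ⬝ᵥ v)) - v ⬝ᵥ M.mulVec v := by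
    intro v
    rw [hA, sub_mulVec, dotProduct_sub, smul_mulVec, dotProduct_smul]
    congr 1
    have : (vecMulVec m m).mulVec v = (m ⬝ᵥ v) • m := by
      ext i
      simp [vecMulVec, mulVec, dotProduct, Finset.mul_sum, mul_comm, mul_assoc,
        mul_left_comm]
    rw [this, dotProduct_smul]
    simp [smul_eq_mul, dotProduct, mul_comm]
  have hMv_ge : ∀ v : Fin d → ℝ, v ⬝ᵥ v = 1 → -L ≤ v ⬝ᵥ M.mulVec v := by
    intro v hv
    have h1 := hle v hv
    rw [hAquad v] at h1
    nlinarith [mul_self_nonneg (m ⬝ᵥ v), inv_nonneg.mpr hρ.le]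
  have hL0 : 0 ≤ L := by
    have hdiag : ∀ k, A k k ≤ L := by
      intro k
      have := hle (Pi.single k 1) (single_unit k)
      rwa [single_quad] at this
    have hsum : ∑ k, A k k ≤ (d : ℝ) * L := by
      calc ∑ k, A k k ≤ ∑ _k : Fin d, L := Finset.sum_le_sum fun k _ => hdiag k
        _ = (d : ℝ) * L := by simp [Finset.sum_const, nsmul_eq_mul]
    have htrA : ∑ k, A k k = ρ⁻¹ * ∑ k, m k * m k := by
      have h0 : ∑ k, M k k = 0 := htr
      simp only [hA, Matrix.sub_apply, Matrix.smul_apply, vecMulVec_apply,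
        smul_eq_mul, Finset.sum_sub_distrib, h0, sub_zero, Finset.mul_sum]
    have hnn : (0 : ℝ) ≤ ∑ k, A k k := by
      rw [htrA]
      exact mul_nonneg (inv_nonneg.mpr hρ.le)
        (Finset.sum_nonneg fun k _ => mul_self_nonneg _)
    nlinarith
  have hup : ∀ v : Fin d → ℝ, v ⬝ᵥ v = 1 →
      v ⬝ᵥ M.mulVec v ≤ ((d : ℝ) - 1) * L := by
    intro v hv
    obtain ⟨b, hb0, hbo⟩ := exists_extend hd0 v hv
    have htr2 : (0 : ℝ) = ∑ i, b i ⬝ᵥ M.mulVec (b i) := by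
      rw [← trace_eq_sum_quad M b hbo, htr]
    have hsplit : ∑ i, b i ⬝ᵥ M.mulVec (b i)
        = v ⬝ᵥ M.mulVec v + ∑ i ∈ Finset.univ.erase ⟨0, hd0⟩, b i ⬝ᵥ M.mulVec (b i) := by
      rw [← Finset.add_sum_erase _ _ (Finset.mem_univ (⟨0, hd0⟩ : Fin d)), hb0]
    have hcard : (Finset.univ.erase (⟨0, hd0⟩ : Fin d)).card = d - 1 := by
      rw [Finset.card_erase_of_mem (Finset.mem_univ _), Finset.card_univ, Fintype.card_fin]
    have hrest : ((d : ℝ) - 1) * (-L) ≤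
        ∑ i ∈ Finset.univ.erase ⟨0, hd0⟩, b i ⬝ᵥ M.mulVec (b i) := by
      have hbd : ∀ i ∈ Finset.univ.erase (⟨0, hd0⟩ : Fin d),
          -L ≤ b i ⬝ᵥ M.mulVec (b i) := by
        intro i _
        apply hMv_ge
        have := hbo i i
        simpa using this
      have := Finset.card_nsmul_le_sum _ _ _ hbd
      rw [hcard] at this
      have hcast : ((d - 1 : ℕ) : ℝ) = (d : ℝ) - 1 := by
        rw [Nat.cast_sub hd0]; simp
      calc ((d : ℝ) - 1) * (-L) = ((d - 1 : ℕ) : ℝ) * (-L) := by rw [hcast]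
        _ = (d - 1 : ℕ) • (-L) := by rw [nsmul_eq_mul]
        _ ≤ _ := this
    have := htr2 ▸ hsplit
    nlinarith
  rw [hrhs]
  apply Real.sSup_le
  · rintro r ⟨v, hv, rfl⟩
    rw [abs_le]
    constructor
    · have h1 := hMv_ge v hv
      nlinarith
    · exact hup v hv
  · exact mul_nonneg (by linarith) hL0
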